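/- Let g : [0,1] → [0,1] be a continuous function with g(0) = g(1) = 0, and let ε > 0. Then there exists δ > 0 such that whenever A is a unital C*-algebra, ω is a state on A, and a ∈ A satisfies 0 ≤ a ≤ 1 and ω(a − a²) < δ, then ω(g(a)) < ε. Here g(a) is obtained by continuous functional calculus, and ω(a − a²), ω(g(a)) are nonnegative real numbers since a − a² and g(a) are positive. -/
import Mathlib


open ComplexOrder

/-- Let `g : [0,1] → [0,1]` be continuous with `g 0 = g 1 = 0`, and let
`ε > 0`.  Then there is `δ > 0` such that whenever `ω` is a state on a unital C*-algebra `A`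
and `a ∈ A` satisfies `0 ≤ a ≤ 1` and `ω (a − a²) < δ`, then `ω (g a) < ε`, where `g a` is
given by the continuous functional calculus. -/
theorem state_small_of_almost_projection (g : ℝ → ℝ) (hg : ContinuousOn g (Set.Icc 0 1))
    (hg01 : ∀ t ∈ Set.Icc (0 : ℝ) 1, g t ∈ Set.Icc (0 : ℝ) 1)
    (hg0 : g 0 = 0) (hg1 : g 1 = 0) (ε : ℝ) (hε : 0 < ε) :
    ∃ δ > (0 : ℝ), ∀ (A : Type*) [CStarAlgebra A] [PartialOrder A] [StarOrderedRing A]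
      (ω : A →ₗ[ℂ] ℂ), ω 1 = 1 → (∀ a : A, 0 ≤ a → 0 ≤ ω a) →
      ∀ a : A, 0 ≤ a → a ≤ 1 → ω (a - a ^ 2) < (δ : ℂ) → ω (cfc g a) < (ε : ℂ) := by
  -- continuity at 0 and 1
  have h0 := (hg 0 (by norm_num)).mono (subset_refl _)
  rw [Metric.continuousWithinAt_iff] at h0
  obtain ⟨η0, hη0, H0⟩ := h0 (ε / 2) (by linarith)
  have h1 := hg 1 (by norm_num)
  rw [Metric.continuousWithinAt_iff] at h1
  obtain ⟨η1, hη1, H1⟩ := h1 (ε / 2) (by linarith)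
  set η : ℝ := min (min η0 η1) (1 / 2) with hη_def
  have hη : 0 < η := lt_min (lt_min hη0 hη1) (by norm_num)
  have hη2 : η ≤ 1 / 2 := min_le_right _ _
  set C : ℝ := 2 / η with hC_def
  have hC : 0 < C := by positivity
  -- key pointwise bound
  have key : ∀ t ∈ Set.Icc (0 : ℝ) 1, g t ≤ ε / 2 + C * (t - t ^ 2) := by
    intro t ht
    obtain ⟨ht0, ht1⟩ := ht
    have htt : 0 ≤ t - t ^ 2 := by nlinarith
    rcases lt_or_ge t η with h | h
    · have := H0 ⟨ht0, ht1⟩ (by simp [Real.dist_eq, abs_of_nonneg ht0]; linarith [min_le_left η0 η1, lt_of_lt_of_le h (le_trans (min_le_left _ _) (min_le_left η0 η1))])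
      rw [hg0, dist_zero_right, Real.norm_eq_abs] at this
      nlinarith [abs_nonneg (g t), le_abs_self (g t)]
    rcases lt_or_ge (1 - η) t with h' | h'
    · have hd : dist t 1 < η1 := by
        rw [Real.dist_eq, abs_of_nonpos (by linarith)]
        have : η ≤ η1 := le_trans (min_le_left _ _) (min_le_right η0 η1)
        linarith
      have := H1 ⟨ht0, ht1⟩ hd
      rw [hg1, dist_zero_right, Real.norm_eq_abs] at this
      nlinarith [le_abs_self (g t)]
    · -- middle: t - t^2 ≥ η/2
      have hmid : η / 2 ≤ t - t ^ 2 := by nlinarith [mul_nonneg (sub_nonneg.mpr h) (sub_nonneg.mpr (by linarith : t ≤ 1 - η))]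
      have hgle : g t ≤ 1 := (hg01 t ⟨ht0, ht1⟩).2
      have : (1 : ℝ) ≤ C * (t - t ^ 2) := by
        rw [hC_def]
        rw [div_mul_eq_mul_div, le_div_iff₀ hη]
        nlinarith
      linarith
  refine ⟨ε * η / 4, by positivity, ?_⟩
  intro A _ _ _ ω hω1 hωpos a ha0 ha1 hωa
  have hsa : IsSelfAdjoint a := IsSelfAdjoint.of_nonneg ha0
  have hspec : ∀ x ∈ spectrum ℝ a, x ∈ Set.Icc (0 : ℝ) 1 := fun x hx =>
    ⟨spectrum_nonneg_of_nonneg ha0 hx, (CFC.le_one_iff a).mp ha1 x hx⟩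
  -- a - a^2 ≥ 0
  have hsub : (0 : A) ≤ a - a ^ 2 := by
    have h2 : a ^ 2 ≤ a ^ 1 := CStarAlgebra.pow_antitone ha0 ha1 one_le_two
    rw [pow_one] at h2
    exact sub_nonneg.mpr h2
  -- cfc g a ≥ 0
  have hcfc0 : (0 : A) ≤ cfc g a :=
    cfc_nonneg (fun x hx => (hg01 x (hspec x hx)).1)
  -- cfc comparison
  have hmono : cfc g a ≤ cfc (fun t : ℝ => ε / 2 + C * (t - t ^ 2)) a :=
    cfc_mono (fun x hx => key x (hspec x hx)) (hg.mono hspec) (by fun_prop)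
  have hcalc : cfc (fun t : ℝ => ε / 2 + C * (t - t ^ 2)) a
      = algebraMap ℝ A (ε / 2) + C • (a - a ^ 2) := by
    rw [cfc_const_add (ε / 2) (fun t : ℝ => C * (t - t ^ 2)) a (by fun_prop)]
    rw [cfc_const_mul C (fun t : ℝ => t - t ^ 2) a (by fun_prop)]
    rw [cfc_sub (fun t : ℝ => t) (fun t : ℝ => t ^ 2) a (by fun_prop) (by fun_prop),
      cfc_id' ℝ a, cfc_pow_id a 2]
  -- now apply ω
  set z : ℂ := ω (a - a ^ 2) with hz_def
  set w : ℂ := ω (cfc g a) with hw_def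
  have hz0 : 0 ≤ z := hωpos _ hsub
  have hw0 : 0 ≤ w := hωpos _ hcfc0
  have hdiff : 0 ≤ ω (cfc (fun t : ℝ => ε / 2 + C * (t - t ^ 2)) a) - w := by
    rw [← map_sub]
    exact hωpos _ (sub_nonneg.mpr hmono)
  have hval : ω (cfc (fun t : ℝ => ε / 2 + C * (t - t ^ 2)) a)
      = ((ε / 2 : ℝ) : ℂ) + ((C : ℝ) : ℂ) * z := by
    rw [hcalc, map_add, ω.map_smul_of_tower]
    congr 1
    · have h' : algebraMap ℝ A (ε / 2) = ((ε / 2 : ℝ) : ℂ) • (1 : A) := by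
        rw [IsScalarTower.algebraMap_apply ℝ ℂ A, Algebra.algebraMap_eq_smul_one]
        norm_num
      rw [h', map_smul, hω1, smul_eq_mul, mul_one]
  -- complex order bookkeeping
  rw [Complex.le_def] at hz0 hw0
  rw [Complex.lt_def] at hωa ⊢
  have hdiff' := hdiff
  rw [hval, Complex.le_def] at hdiff'
  simp only [Complex.sub_re, Complex.add_re, Complex.ofReal_re, Complex.mul_re,
    Complex.ofReal_im, Complex.sub_im, Complex.add_im, Complex.mul_im,
    Complex.zero_re, Complex.zero_im, Complex.ofReal_im] at hz0 hw0 hωa hdiff' ⊢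
  constructor
  · have hzδ : z.re < ε * η / 4 := by
      have := hωa.1
      simpa using this
    have h1 : w.re ≤ ε / 2 + C * z.re := by nlinarith [hdiff'.1]
    have hCδ : C * z.re < ε / 2 := by
      have : C * z.re < C * (ε * η / 4) := by
        rcases eq_or_lt_of_le hz0.1 with h | h
        · rw [← h, mul_zero]; positivity
        · exact mul_lt_mul_of_pos_left hzδ hC
      have hCe : C * (ε * η / 4) = ε / 2 := by
        rw [hC_def]; field_simp; ring
      linarith
    linarith
  · exact hw0.2.symm
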